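/- Let C be a triangulated category with both a bounded non-degenerate t-structure and a weight structure, such that every object of the heart of the t-structure which is pure of a single weight is semisimple, and such that for every object F pure of weight 0 the n-th perverse cohomology object ^pH^n(F) is pure of weight -n. Then every pure object F of weight 0 is isomorphic to the direct sum of its shifted t-cohomology objects ⊕_n (^pH^n F)[-n]. -/

import Mathlib

open CategoryTheory Limits Pretriangulated

/-- A weight structure on a triangulated category, following Bondarko:
a pair of full subcategories (given by predicates on objects) `le0 = C_{w≤0}` and
`ge0 = C_{w≥0}`, closed under direct summands, with the shift-monotonicity conditions
`C_{w≤0} ⊆ C_{w≤0}[1]` and `C_{w≥0}[1] ⊆ C_{w≥0}`, orthogonality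
`Hom(X, Y) = 0` for `X ∈ C_{w≤0}`, `Y ∈ C_{w≥0}[1]`, and weight decomposition triangles. -/
structure WeightStructure (C : Type*) [Category C] [Preadditive C] [HasZeroObject C]
    [HasShift C ℤ] [∀ n : ℤ, (CategoryTheory.shiftFunctor C n).Additive]
    [Pretriangulated C] where
  le0 : C → Prop
  ge0 : C → Prop
  le0_summand : ∀ ⦃X Y : C⦄ (i : X ⟶ Y) (r : Y ⟶ X), i ≫ r = 𝟙 X → le0 Y → le0 X
  ge0_summand : ∀ ⦃X Y : C⦄ (i : X ⟶ Y) (r : Y ⟶ X), i ≫ r = 𝟙 X → ge0 Y → ge0 X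
  le0_shift : ∀ ⦃X : C⦄, le0 X → le0 (X⟦(-1 : ℤ)⟧)
  ge0_shift : ∀ ⦃X : C⦄, ge0 X → ge0 (X⟦(1 : ℤ)⟧)
  orth : ∀ ⦃X Y : C⦄, le0 X → ge0 Y → ∀ f : X ⟶ Y⟦(1 : ℤ)⟧, f = 0
  decomp : ∀ X : C, ∃ (A B : C) (_ : le0 A) (_ : ge0 B)
    (f : A ⟶ X) (g : X ⟶ B⟦(1 : ℤ)⟧) (h : B⟦(1 : ℤ)⟧ ⟶ A⟦(1 : ℤ)⟧),
    Triangle.mk f g h ∈ distTriang C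


/-- The class `C_{w=p}` of objects pure of weight `p` for a weight structure:
`C_{w≤p} ∩ C_{w≥p}` with `C_{w≤p} = C_{w≤0}[p]` and `C_{w≥p} = C_{w≥0}[p]`. -/
def WeightStructure.pure {C : Type*} [Category C] [Preadditive C] [HasZeroObject C]
    [HasShift C ℤ] [∀ n : ℤ, (CategoryTheory.shiftFunctor C n).Additive]
    [Pretriangulated C] (w : WeightStructure C) (p : ℤ) (X : C) : Prop :=
  w.le0 (X⟦(-p)⟧) ∧ w.ge0 (X⟦(-p)⟧)

section Helpers
open CategoryTheory.Category

variable {D : Type*} [Category D] [Preadditive D] [HasFiniteBiproducts D]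
  [HasBinaryBiproducts D]

lemma biproductInsertIso {ι : Type} [DecidableEq ι] (f : ι → D)
    (s : Finset ι) (x : ι) (hx : x ∉ s) :
    Nonempty ((⨁ fun i : ↥(insert x s) => f i) ≅ f x ⊞ ⨁ (fun i : ↥s => f i)) := by
  refine ⟨{
    hom := biprod.lift (biproduct.π (fun i : ↥(insert x s) => f i)
        ⟨x, Finset.mem_insert_self x s⟩)
      (biproduct.lift fun (j : ↥s) => biproduct.π (fun i : ↥(insert x s) => f i)
        ⟨(j : ι), Finset.mem_insert_of_mem j.2⟩)
    inv := biprod.desc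
      (biproduct.lift fun (i : ↥(insert x s)) =>
        if h : (i : ι) = x then eqToHom (by rw [h]) else 0)
      (biproduct.lift fun (i : ↥(insert x s)) => if h : (i : ι) ∈ s then
        biproduct.π (fun j : ↥s => f j) ⟨(i : ι), h⟩ else 0)
    hom_inv_id := ?_
    inv_hom_id := ?_ }⟩
  · apply biproduct.hom_ext
    rintro ⟨jv, hj⟩
    simp only [assoc, biprod.lift_desc, Preadditive.add_comp, biproduct.lift_π, id_comp]
    by_cases h : jv = x
    · subst h
      rw [dif_pos rfl, dif_neg hx]
      simp
    · rw [dif_neg h, dif_pos (Finset.mem_of_mem_insert_of_ne hj h)]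
      simp
  · apply biprod.hom_ext'
    · apply biprod.hom_ext
      · simp
      · apply biproduct.hom_ext
        rintro ⟨jv, hj⟩
        simp only [assoc, biprod.inl_desc_assoc, biprod.lift_snd, biproduct.lift_π,
          zero_comp, comp_zero]
        rw [dif_neg (by rintro rfl; exact hx hj)]
        simp
    · apply biprod.hom_ext
      · simp [dif_neg hx]
      · apply biproduct.hom_ext
        rintro ⟨jv, hj⟩
        simp only [assoc, biprod.inr_desc_assoc, biprod.lift_snd, biproduct.lift_π,
          zero_comp, comp_zero, id_comp]
        rw [dif_pos hj]
        simp

variable {C : Type*} [Category C] [Preadditive C] [HasZeroObject C] [HasShift C ℤ]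
  [∀ n : ℤ, (CategoryTheory.shiftFunctor C n).Additive] [Pretriangulated C]
  (w : WeightStructure C)

lemma WS.le0_iso {X Y : C} (e : X ≅ Y) (h : w.le0 X) : w.le0 Y :=
  w.le0_summand e.inv e.hom e.inv_hom_id h

lemma WS.ge0_iso {X Y : C} (e : X ≅ Y) (h : w.ge0 X) : w.ge0 Y :=
  w.ge0_summand e.inv e.hom e.inv_hom_id h

lemma WS.homZero {A B : C} (j k : ℤ) (hk : k + 1 = j)
    (hA : w.le0 (A⟦j⟧)) (hB : w.ge0 (B⟦k⟧)) (f : A ⟶ B) : f = 0 := by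
  have h1 : (shiftFunctor C j).map f ≫ ((shiftFunctorAdd' C k 1 j hk).app B).hom = 0 :=
    w.orth hA hB _
  have h2 : (shiftFunctor C j).map f = 0 := by
    rw [← cancel_mono ((shiftFunctorAdd' C k 1 j hk).app B).hom, h1, zero_comp]
  apply (shiftFunctor C j).map_injective
  rw [h2, Functor.map_zero]

lemma WS.ge0_of_forall (X : C)
    (H : ∀ Z : C, w.le0 Z → ∀ f : Z⟦(-1 : ℤ)⟧ ⟶ X, f = 0) : w.ge0 X := by
  obtain ⟨A, B, hA, hB, f, g, h3, hT⟩ := w.decomp (X⟦(1 : ℤ)⟧)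
  have hT' := Triangle.shift_distinguished _ hT (-1)
  set T' := (Triangle.shiftFunctor C (-1)).obj (Triangle.mk f g h3) with hT'def
  have e : T'.obj₂ ≅ X := (shiftFunctorCompIsoId C 1 (-1) (by ring)).app X
  have hm : T'.mor₁ = 0 := by
    have h0 : T'.mor₁ ≫ e.hom = 0 := H A hA _
    rw [← cancel_mono e.hom, h0, zero_comp]
  obtain ⟨r, hr⟩ := Triangle.yoneda_exact₂ T' hT' e.hom (by rw [hm, zero_comp])
  have hB' : w.ge0 T'.obj₃ := by
    refine WS.ge0_iso w (X := B) ?_ hB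
    exact ((shiftFunctorCompIsoId C 1 (-1) (by ring)).app B).symm
  exact w.ge0_summand (e.inv ≫ T'.mor₂) r (by rw [assoc, ← hr, e.inv_hom_id]) hB'

lemma WS.ge0_shift_le (X : C) (i j : ℤ) (hij : i ≤ j) (h : w.ge0 (X⟦i⟧)) :
    w.ge0 (X⟦j⟧) := by
  refine Int.le_induction (motive := fun j _ => w.ge0 (X⟦j⟧)) h (fun n _ hn => ?_) j hij
  exact WS.ge0_iso w (((shiftFunctorAdd' C n 1 (n+1) rfl).app X).symm) (w.ge0_shift hn)

lemma WS.ge0_biprod {X Y : C} [HasBinaryBiproduct X Y]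
    (hX : w.ge0 X) (hY : w.ge0 Y) : w.ge0 (X ⊞ Y) := by
  refine WS.ge0_of_forall w _ (fun Z hZ f => ?_)
  have hle : w.le0 ((Z⟦(-1:ℤ)⟧)⟦(1:ℤ)⟧) :=
    WS.le0_iso w (((shiftFunctorCompIsoId C (-1) 1 (by ring)).app Z).symm) hZ
  apply biprod.hom_ext
  · rw [zero_comp]
    exact WS.homZero w 1 0 (by ring) hle
      (WS.ge0_iso w ((shiftFunctorZero C ℤ).app X).symm hX) _
  · rw [zero_comp]
    exact WS.homZero w 1 0 (by ring) hle
      (WS.ge0_iso w ((shiftFunctorZero C ℤ).app Y).symm hY) _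

lemma WS.ge0_of_isZero (X : C) (h : IsZero X) : w.ge0 X :=
  WS.ge0_of_forall w X (fun _ _ f => h.eq_of_tgt f 0)

lemma mapBiprodIso' {E : Type*} [Category E] [Preadditive E] [HasBinaryBiproducts E]
    (F : E ⥤ E) [F.Additive] (X Y : E) :
    Nonempty (F.obj (X ⊞ Y) ≅ F.obj X ⊞ F.obj Y) :=
  ⟨{ hom := biprod.lift (F.map biprod.fst) (F.map biprod.snd)
     inv := biprod.desc (F.map biprod.inl) (F.map biprod.inr)
     hom_inv_id := by
       rw [biprod.lift_desc, ← F.map_comp, ← F.map_comp, ← F.map_add, biprod.total, F.map_id]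
     inv_hom_id := by
       apply biprod.hom_ext'
       · apply biprod.hom_ext <;> simp [← F.map_comp]
       · apply biprod.hom_ext <;> simp [← F.map_comp] }⟩

lemma WS.split (T : Triangle C) (hT : T ∈ distTriang C) (h : T.mor₃ = 0)
    [HasBinaryBiproduct T.obj₁ T.obj₃] :
    Nonempty (T.obj₂ ≅ T.obj₁ ⊞ T.obj₃) := by
  obtain ⟨r, hr⟩ := Triangle.coyoneda_exact₃ T hT (𝟙 T.obj₃) (by rw [h, comp_zero])
  let φ : binaryBiproductTriangle T.obj₁ T.obj₃ ⟶ T :=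
    { hom₁ := 𝟙 T.obj₁
      hom₂ := biprod.desc T.mor₁ r
      hom₃ := 𝟙 T.obj₃
      comm₁ := by show (biprod.inl : T.obj₁ ⟶ T.obj₁ ⊞ T.obj₃) ≫ biprod.desc T.mor₁ r = 𝟙 T.obj₁ ≫ T.mor₁; simp [binaryBiproductTriangle]
      comm₂ := by
        apply biprod.hom_ext'
        · show (biprod.inl : T.obj₁ ⟶ T.obj₁ ⊞ T.obj₃) ≫ biprod.snd ≫ 𝟙 T.obj₃ = biprod.inl ≫ biprod.desc T.mor₁ r ≫ T.mor₂
          simp [binaryBiproductTriangle, comp_distTriang_mor_zero₁₂ T hT]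
        · show (biprod.inr : T.obj₃ ⟶ T.obj₁ ⊞ T.obj₃) ≫ biprod.snd ≫ 𝟙 T.obj₃ = biprod.inr ≫ biprod.desc T.mor₁ r ≫ T.mor₂
          simp [binaryBiproductTriangle, ← hr]
      comm₃ := by
        show (0 : T.obj₃ ⟶ T.obj₁⟦(1:ℤ)⟧) ≫ (shiftFunctor C 1).map (𝟙 T.obj₁) = 𝟙 T.obj₃ ≫ T.mor₃
        simp [binaryBiproductTriangle, h] }
  have : IsIso φ.hom₂ :=
    isIso₂_of_isIso₁₃ φ (binaryBiproductTriangle_distinguished _ _) hT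
      (by dsimp [φ]; exact IsIso.id _) (by dsimp [φ]; exact IsIso.id _)
  exact ⟨(asIso φ.hom₂).symm⟩

end Helpers

/-- Let `C` be a triangulated category with a bounded non-degenerate t-structure `t`
(with cohomology objects `pH n X`, related to `X` by finite Postnikov towers) and a
weight structure `w`, such that pure objects of the heart are semisimple and such that
for every `F` pure of weight `0` the perverse cohomology `pH n F` is pure of weight
`-n`.  Then every object `F` pure of weight `0` is isomorphic to the direct sum of its
shifted t-cohomology objects `⊕ₙ (pH n F)[-n]`. -/
theorem pure_object_is_direct_sum_of_perverse_cohomologies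
    {C : Type*} [Category C] [Preadditive C] [HasZeroObject C] [HasShift C ℤ]
    [∀ n : ℤ, (CategoryTheory.shiftFunctor C n).Additive] [Pretriangulated C]
    [HasFiniteBiproducts C]
    (t : Triangulated.TStructure C) (w : WeightStructure C)
    (pH : ℤ → C → C)
    (hheart : ∀ (n : ℤ) (X : C), t.le 0 (pH n X) ∧ t.ge 0 (pH n X))
    (htower : ∀ X : C, ∃ (a b : ℤ) (Y : ℤ → C),
      (∀ n : ℤ, n < a → IsZero (Y n)) ∧ (∀ n : ℤ, b ≤ n → Nonempty (Y n ≅ X)) ∧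
      ∀ n : ℤ, ∃ (f : Y (n - 1) ⟶ Y n) (g : Y n ⟶ (pH n X)⟦(-n)⟧)
        (h : (pH n X)⟦(-n)⟧ ⟶ (Y (n - 1))⟦(1 : ℤ)⟧),
        Triangle.mk f g h ∈ distTriang C)
    (hnondeg : ∀ X : C, (∀ n : ℤ, IsZero (pH n X)) → IsZero X)
    (hsemi : ∀ (M : C) (p : ℤ), (t.le 0 M ∧ t.ge 0 M) → w.pure p M →
      ∀ (N : C) (f : N ⟶ M), (t.le 0 N ∧ t.ge 0 N) → Mono f →
        ∃ r : M ⟶ N, f ≫ r = 𝟙 N)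
    (hpureH : ∀ F : C, w.pure 0 F → ∀ n : ℤ, w.pure (-n) (pH n F)) :
    ∀ F : C, w.pure 0 F →
      ∃ s : Finset ℤ, Nonempty (F ≅ ⨁ (fun n : s => (pH n F)⟦(-(n : ℤ))⟧)) := by
  haveI : HasBinaryBiproducts C := hasBinaryBiproducts_of_finite_biproducts C
  intro F hF
  obtain ⟨a, b, Y, ha, hb, htri⟩ := htower F
  -- purity of the cohomology objects
  have hple : ∀ n : ℤ, w.le0 ((pH n F)⟦n⟧) := by
    intro n
    have := (hpureH F hF n).1
    rwa [neg_neg] at this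
  have hpge : ∀ n : ℤ, w.ge0 ((pH n F)⟦n⟧) := by
    intro n
    have := (hpureH F hF n).2
    rwa [neg_neg] at this
  -- key induction
  have key : ∀ n : ℤ, a - 1 ≤ n →
      Nonempty (Y n ≅ ⨁ (fun m : ↥(Finset.Icc a n) => (pH (m : ℤ) F)⟦(-(m : ℤ))⟧)) ∧
      ∀ j : ℤ, 2 * n ≤ j → w.ge0 ((Y n)⟦j⟧) := by
    refine Int.le_induction ⟨⟨?_⟩, ?_⟩ ?_
    · -- base iso : Y (a-1) is zero and the empty biproduct is zero
      refine (ha (a - 1) (by omega)).iso ?_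
      rw [IsZero.iff_id_eq_zero]
      apply biproduct.hom_ext
      rintro ⟨m, hm⟩
      rw [Finset.mem_Icc] at hm
      omega
    · -- base ge0
      intro j _
      exact WS.ge0_of_isZero w _
        ((shiftFunctor C j).map_isZero (ha (a - 1) (by omega)))
    · -- inductive step
      rintro n hn ⟨⟨e⟩, hge⟩
      have spec := htri (n + 1)
      rw [show n + 1 - 1 = n by ring] at spec
      obtain ⟨f, g, h3, hTd⟩ := spec
      -- the connecting map vanishes for weight reasons
      have h30 : h3 = 0 := by
        refine WS.homZero w (2 * n + 2) (2 * n + 1) (by ring) ?_ ?_ h3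
        · refine WS.le0_iso w ?_ (hple (n + 1))
          exact (shiftFunctorAdd' C (-(n+1)) (2*n+2) (n+1) (by ring)).app (pH (n+1) F)
        · refine WS.ge0_iso w
            ((shiftFunctorAdd' C 1 (2*n+1) (2*n+2) (by ring)).app (Y n))
            (hge (2*n+2) (by omega))
      obtain ⟨esplit⟩ := WS.split (Triangle.mk f g h3) hTd h30
      constructor
      · -- the iso with the biproduct
        have hIcc : Finset.Icc a (n + 1) = insert (n + 1) (Finset.Icc a n) := by
          ext m
          simp only [Finset.mem_Icc, Finset.mem_insert]
          omega
        have hnotmem : (n + 1) ∉ Finset.Icc a n := by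
          rw [Finset.mem_Icc]; omega
        obtain ⟨eins⟩ := biproductInsertIso
          (fun m : ℤ => (pH m F)⟦(-m : ℤ)⟧) (Finset.Icc a n) (n + 1) hnotmem
        rw [hIcc]
        exact ⟨esplit ≪≫ biprod.mapIso e (Iso.refl _) ≪≫ (biprod.braiding _ _).symm
          ≪≫ eins.symm⟩
      · -- the weight bound
        intro j hj
        obtain ⟨e3⟩ := mapBiprodIso' (shiftFunctor C j) (Y n)
          ((pH (n+1) F)⟦(-(n+1) : ℤ)⟧)
        have e2 : ((Y (n+1))⟦j⟧ : C) ≅ (Y n)⟦j⟧ ⊞ ((pH (n+1) F)⟦(-(n+1) : ℤ)⟧)⟦j⟧ :=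
          (shiftFunctor C j).mapIso esplit ≪≫ e3
        refine WS.ge0_iso w e2.symm (WS.ge0_biprod w (hge j (by omega)) ?_)
        exact WS.ge0_iso w
          ((shiftFunctorAdd' C (-(n+1)) j (-(n+1) + j) rfl).app (pH (n+1) F))
          (WS.ge0_shift_le w _ (n+1) (-(n+1) + j) (by omega) (hpge (n+1)))
  -- conclusion
  by_cases hab : a - 1 ≤ b
  · obtain ⟨⟨e⟩, -⟩ := key b hab
    exact ⟨Finset.Icc a b, ⟨(hb b le_rfl).some.symm ≪≫ e⟩⟩
  · refine ⟨∅, ⟨?_⟩⟩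
    have hF0 : IsZero F :=
      ((ha (a-1) (by omega)).of_iso (hb (a-1) (by omega)).some.symm)
    refine hF0.iso ?_
    rw [IsZero.iff_id_eq_zero]
    apply biproduct.hom_ext
    rintro ⟨m, hm⟩
    simp at hm
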